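/- Let $C_1,\dots,C_{14}$ be the 14 basis elements of $\mathfrak{g}_2$ in its 7-dimensional fundamental representation as given in the paper (e.g., $C_1 = \frac{1}{\sqrt 2}(-e_{47}-e_{56}+e_{65}+e_{74})$, ..., $C_{14} = \frac{1}{\sqrt 6}(-2e_{17}+e_{24}-e_{35}-e_{42}+e_{53}+2e_{71})$). Then the Casimir tensor satisfies $-\sum_{a=1}^{14} C_a \otimes C_a = \sum_{i,j=1}^7 e_{ij}\otimes e_{ji} - \sum_{i,j=1}^7 e_{ij}\otimes e_{ij} + \frac{1}{3}\sum_{i=1}^7 \mathbb{O}_i \otimes \mathbb{O}_i$, where $\mathbb{O}_1,\dots,\mathbb{O}_7$ are the right octonion multiplication matrices. -/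

import Mathlib

open Matrix Kronecker

/-- `7 × 7` real matrix unit. -/
def E7 (i j : Fin 7) : Matrix (Fin 7) (Fin 7) ℝ := Matrix.single i j 1

/-- The 14 basis elements `C₁,…,C₁₄` of `𝔤₂` in the 7-dimensional fundamental
representation (0-based index: `g2C ⟨a-1,_⟩ = Cₐ`). -/
noncomputable def g2C (a : Fin 14) : Matrix (Fin 7) (Fin 7) ℝ :=
  match a.val with
  | 0 => (Real.sqrt 2)⁻¹ • (-E7 3 6 - E7 4 5 + E7 5 4 + E7 6 3)
  | 1 => (Real.sqrt 2)⁻¹ • (E7 3 5 - E7 4 6 - E7 5 3 + E7 6 4)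
  | 2 => (Real.sqrt 2)⁻¹ • (-E7 3 4 + E7 4 3 - E7 5 6 + E7 6 5)
  | 3 => (Real.sqrt 2)⁻¹ • (E7 1 6 + E7 2 5 - E7 5 2 - E7 6 1)
  | 4 => (Real.sqrt 2)⁻¹ • (-E7 1 5 + E7 2 6 + E7 5 1 - E7 6 2)
  | 5 => (Real.sqrt 2)⁻¹ • (E7 1 4 - E7 2 3 + E7 3 2 - E7 4 1)
  | 6 => (Real.sqrt 2)⁻¹ • (-E7 1 3 - E7 2 4 + E7 3 1 + E7 4 2)
  | 7 => (Real.sqrt 6)⁻¹ •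
      (-(2 : ℝ) • E7 1 2 + (2 : ℝ) • E7 2 1 + E7 3 4 - E7 4 3 - E7 5 6 + E7 6 5)
  | 8 => (Real.sqrt 6)⁻¹ •
      (-(2 : ℝ) • E7 0 1 + (2 : ℝ) • E7 1 0 + E7 3 6 - E7 4 5 + E7 5 4 - E7 6 3)
  | 9 => (Real.sqrt 6)⁻¹ •
      (-(2 : ℝ) • E7 0 2 + (2 : ℝ) • E7 2 0 - E7 3 5 - E7 4 6 + E7 5 3 + E7 6 4)
  | 10 => (Real.sqrt 6)⁻¹ •
      (-(2 : ℝ) • E7 0 3 - E7 1 6 + E7 2 5 + (2 : ℝ) • E7 3 0 - E7 5 2 + E7 6 1)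
  | 11 => (Real.sqrt 6)⁻¹ •
      (-(2 : ℝ) • E7 0 4 + E7 1 5 + E7 2 6 + (2 : ℝ) • E7 4 0 - E7 5 1 - E7 6 2)
  | 12 => (Real.sqrt 6)⁻¹ •
      (-(2 : ℝ) • E7 0 5 - E7 1 4 - E7 2 3 + E7 3 2 + E7 4 1 + (2 : ℝ) • E7 5 0)
  | _ => (Real.sqrt 6)⁻¹ •
      (-(2 : ℝ) • E7 0 6 + E7 1 3 - E7 2 4 - E7 3 1 + E7 4 2 + (2 : ℝ) • E7 6 0)


/-- The right octonion multiplication matrices `𝕆₁,…,𝕆₇` (0-based index). -/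
def octO (i : Fin 7) : Matrix (Fin 7) (Fin 7) ℝ :=
  match i.val with
  | 0 => E7 2 1 - E7 1 2 + E7 4 3 - E7 3 4 - E7 6 5 + E7 5 6
  | 1 => E7 0 2 - E7 2 0 + E7 5 3 - E7 3 5 + E7 6 4 - E7 4 6
  | 2 => E7 1 0 - E7 0 1 + E7 6 3 - E7 3 6 - E7 5 4 + E7 4 5
  | 3 => E7 0 4 + E7 1 5 + E7 2 6 - E7 4 0 - E7 5 1 - E7 6 2
  | 4 => E7 3 0 - E7 6 1 + E7 5 2 - E7 0 3 - E7 2 5 + E7 1 6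
  | 5 => E7 6 0 + E7 3 1 - E7 4 2 - E7 1 3 + E7 2 4 - E7 0 6
  | _ => E7 4 1 - E7 5 0 + E7 3 2 - E7 2 3 - E7 1 4 + E7 0 5

private lemma negk (A B : Matrix (Fin 7) (Fin 7) ℝ) : (-A) ⊗ₖ B = -(A ⊗ₖ B) := by
  ext ⟨i,k⟩ ⟨j,l⟩; simp [Matrix.kroneckerMap_apply]

private lemma kneg (A B : Matrix (Fin 7) (Fin 7) ℝ) : A ⊗ₖ (-B) = -(A ⊗ₖ B) := by
  ext ⟨i,k⟩ ⟨j,l⟩; simp [Matrix.kroneckerMap_apply]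

private lemma smulk (c : ℝ) (A B : Matrix (Fin 7) (Fin 7) ℝ) :
    (c • A) ⊗ₖ (c • B) = (c * c) • (A ⊗ₖ B) := by
  rw [Matrix.smul_kronecker, Matrix.kronecker_smul, smul_smul]

set_option maxHeartbeats 4000000 in
/-- The Casimir tensor of `𝔤₂`:
`-Σₐ Cₐ ⊗ Cₐ = Σᵢⱼ eᵢⱼ⊗eⱼᵢ - Σᵢⱼ eᵢⱼ⊗eᵢⱼ + (1/3) Σᵢ 𝕆ᵢ⊗𝕆ᵢ`. -/
theorem stmt17 :
    -∑ a : Fin 14, g2C a ⊗ₖ g2C a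
      = (∑ i : Fin 7, ∑ j : Fin 7, E7 i j ⊗ₖ E7 j i)
        - (∑ i : Fin 7, ∑ j : Fin 7, E7 i j ⊗ₖ E7 i j)
        + (1 / 3 : ℝ) • ∑ i : Fin 7, octO i ⊗ₖ octO i := by
  have h2 : ((Real.sqrt 2)⁻¹ : ℝ) * (Real.sqrt 2)⁻¹ = (2:ℝ)⁻¹ := by
    rw [← mul_inv, Real.mul_self_sqrt (by norm_num : (0:ℝ) ≤ 2)]
  have h6 : ((Real.sqrt 6)⁻¹ : ℝ) * (Real.sqrt 6)⁻¹ = (6:ℝ)⁻¹ := by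
    rw [← mul_inv, Real.mul_self_sqrt (by norm_num : (0:ℝ) ≤ 6)]
  have hs : (∑ a : Fin 14, g2C a ⊗ₖ g2C a) = g2C 0 ⊗ₖ g2C 0 + g2C 1 ⊗ₖ g2C 1 + g2C 2 ⊗ₖ g2C 2 + g2C 3 ⊗ₖ g2C 3 + g2C 4 ⊗ₖ g2C 4 + g2C 5 ⊗ₖ g2C 5 + g2C 6 ⊗ₖ g2C 6 + g2C 7 ⊗ₖ g2C 7 + g2C 8 ⊗ₖ g2C 8 + g2C 9 ⊗ₖ g2C 9 + g2C 10 ⊗ₖ g2C 10 + g2C 11 ⊗ₖ g2C 11 + g2C 12 ⊗ₖ g2C 12 + g2C 13 ⊗ₖ g2C 13 := by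
    simp [Fin.sum_univ_succ]; abel
  rw [hs]
  simp only [g2C, octO, Fin.sum_univ_seven, smulk, h2, h6, Fin.isValue, Fin.val_zero, Fin.val_one, Fin.val_two,
    Fin.coe_ofNat_eq_mod, Nat.reduceMod]
  simp only [sub_eq_add_neg, neg_smul, Matrix.add_kronecker, Matrix.kronecker_add, negk, kneg,
    Matrix.smul_kronecker, Matrix.kronecker_smul]
  module
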